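/- Let T(x) = x/(1 − e^{−x}) be the Todd power series and T^{(m)} its m-th derivative. Then for every n ≥ 1, the formal power series identity ∑_{m=0}^{n} ((−v)^m / m!) T^{(m)}(v) = (T(v) − v T'(v)) · ∑_{l=1}^{n} A(n,l) (−v)^{n−l} T(v)^{l−1} holds, where A(n,l) = (1/n!) ∑_{m=0}^{l} (-1)^{l-m} C(l,m) m^n. -/

import Mathlib

open Finset PowerSeries

/-- The number `A(n,l)` from the paper. -/
noncomputable def A (n l : ℕ) : ℚ :=
  if l ≤ n then
    (1 / n.factorial) * ∑ m ∈ Finset.range (l + 1),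
      (-1) ^ (l - m) * (l.choose m : ℚ) * (m : ℚ) ^ n
  else 0

/-- The formal derivative on `ℚ⟦X⟧`. -/
noncomputable def der (f : PowerSeries ℚ) : PowerSeries ℚ := PowerSeries.derivative ℚ f

/-- Coefficient version of A. -/
noncomputable def AC (n l : ℕ) : ℚ := PowerSeries.coeff (R := ℚ) n ((PowerSeries.exp ℚ - 1) ^ l)

lemma der_add (f g : ℚ⟦X⟧) : der (f + g) = der f + der g := by
  unfold der; exact map_add _ f g

lemma der_sub (f g : ℚ⟦X⟧) : der (f - g) = der f - der g := by
  ext k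
  simp [der, PowerSeries.coeff_derivative, sub_mul]

lemma der_mul (f g : ℚ⟦X⟧) : der (f * g) = der f * g + f * der g := by
  unfold der
  rw [Derivation.leibniz]
  simp only [smul_eq_mul]
  ring

lemma der_C (a : ℚ) : der (PowerSeries.C (R := ℚ) a) = 0 := by
  unfold der; simp

lemma der_X : der (PowerSeries.X : ℚ⟦X⟧) = 1 := by
  unfold der; simp

lemma der_one : der (1 : ℚ⟦X⟧) = 0 := by
  unfold der; simp

lemma der_sum {s : Finset ℕ} (f : ℕ → ℚ⟦X⟧) :
    der (∑ i ∈ s, f i) = ∑ i ∈ s, der (f i) := by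
  unfold der
  exact map_sum (PowerSeries.derivative ℚ : Derivation ℚ ℚ⟦X⟧ ℚ⟦X⟧).toLinearMap f s

lemma der_exp : der (PowerSeries.exp ℚ) = PowerSeries.exp ℚ := by
  ext k
  simp [der, PowerSeries.coeff_derivative, Nat.factorial_succ]
  field_simp

lemma der_E : der (PowerSeries.rescale (-1 : ℚ) (PowerSeries.exp ℚ)) =
    -PowerSeries.rescale (-1 : ℚ) (PowerSeries.exp ℚ) := by
  ext k
  simp [der, PowerSeries.coeff_derivative, PowerSeries.coeff_rescale, Nat.factorial_succ,
    pow_succ]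
  field_simp


lemma AC_vanish {n l : ℕ} (h : n < l) : AC n l = 0 := by
  unfold AC
  have hdvd : (PowerSeries.X : ℚ⟦X⟧) ^ l ∣ (PowerSeries.exp ℚ - 1) ^ l := by
    apply pow_dvd_pow_of_dvd
    rw [PowerSeries.X_dvd_iff]
    simp
  exact (PowerSeries.X_pow_dvd_iff.mp hdvd) n h

lemma AC_zero {n : ℕ} (h : 1 ≤ n) : AC n 0 = 0 := by
  unfold AC
  rw [pow_zero, PowerSeries.coeff_one, if_neg (by omega)]

lemma AC_rec (n l : ℕ) :
    ((n : ℚ) + 1) * AC (n + 1) (l + 1) = ((l : ℚ) + 1) * (AC n (l + 1) + AC n l) := by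
  have hder : PowerSeries.derivative ℚ ((PowerSeries.exp ℚ - 1) ^ (l + 1)) =
      ((l : ℚ⟦X⟧) + 1) * ((PowerSeries.exp ℚ - 1) ^ (l + 1) + (PowerSeries.exp ℚ - 1) ^ l) := by
    rw [Derivation.leibniz_pow]
    have h2 : PowerSeries.derivative ℚ (PowerSeries.exp ℚ - 1) = PowerSeries.exp ℚ := by
      ext k
      simp [PowerSeries.coeff_derivative, Nat.factorial_succ]
      field_simp
    rw [h2]
    simp only [smul_eq_mul, nsmul_eq_mul, Nat.add_sub_cancel]
    push_cast
    ring
  have := congrArg (PowerSeries.coeff (R := ℚ) n) hder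
  rw [PowerSeries.coeff_derivative] at this
  have hc : ((l : ℚ⟦X⟧) + 1) = PowerSeries.C (R := ℚ) ((l : ℚ) + 1) := by
    simp
  rw [hc, PowerSeries.coeff_C_mul, map_add] at this
  unfold AC
  rw [mul_comm]
  exact this

lemma A_eq_AC (n l : ℕ) (h : l ≤ n) : A n l = AC n l := by
  unfold A
  rw [if_pos h]
  unfold AC
  rw [sub_pow]
  rw [map_sum, Finset.mul_sum]
  apply Finset.sum_congr rfl
  intro m hm
  rw [Finset.mem_range] at hm
  have hexp : ((-1 : ℚ⟦X⟧) ^ (m + l) * PowerSeries.exp ℚ ^ m * (1 : ℚ⟦X⟧) ^ (l - m) *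
      ((l.choose m : ℕ) : ℚ⟦X⟧)) =
      PowerSeries.C (R := ℚ) ((-1 : ℚ) ^ (m + l) * (l.choose m : ℚ)) *
        PowerSeries.rescale (m : ℚ) (PowerSeries.exp ℚ) := by
    rw [PowerSeries.exp_pow_eq_rescale_exp]
    push_cast
    rw [map_mul]
    have : (PowerSeries.C (R := ℚ)) ((-1 : ℚ) ^ (m + l)) = (-1 : ℚ⟦X⟧) ^ (m + l) := by
      rw [map_pow]; simp
    rw [this]
    rw [map_natCast (PowerSeries.C (R := ℚ)) (l.choose m)]
    push_cast
    ring
  rw [hexp, PowerSeries.coeff_C_mul, PowerSeries.coeff_rescale, PowerSeries.coeff_exp]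
  have hsgn : (-1 : ℚ) ^ (l - m) = (-1 : ℚ) ^ (m + l) := by
    rw [show m + l = (l - m) + 2 * m by omega, pow_add, pow_mul]
    norm_num
  rw [hsgn]
  simp only [Algebra.algebraMap_self, RingHom.id_apply]
  ring

lemma X_der_negX_pow (k : ℕ) :
    PowerSeries.X * der ((-PowerSeries.X : ℚ⟦X⟧) ^ k) = (k : ℚ⟦X⟧) * (-PowerSeries.X) ^ k := by
  induction k with
  | zero => simp [der_one]
  | succ k ih =>
    rw [pow_succ, der_mul]
    have hnx : der (-PowerSeries.X : ℚ⟦X⟧) = -1 := by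
      have : (-PowerSeries.X : ℚ⟦X⟧) = 0 - PowerSeries.X := by ring
      rw [this, der_sub, der_X]
      have : der (0 : ℚ⟦X⟧) = 0 := by
        have := der_C 0; simpa using this
      rw [this]; ring
    rw [hnx]
    push_cast
    linear_combination (-PowerSeries.X : ℚ⟦X⟧) * ih

lemma X_der_T_pow (T : ℚ⟦X⟧)
    (hkey : PowerSeries.X * der T = T * (1 - T + PowerSeries.X)) (j : ℕ) :
    PowerSeries.X * der (T ^ j) = (j : ℚ⟦X⟧) * (T ^ j * (1 - T + PowerSeries.X)) := by
  induction j with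
  | zero => simp [der_one]
  | succ j ih =>
    rw [pow_succ, der_mul]
    push_cast
    linear_combination T * ih + (T ^ j) * hkey

lemma der_negX_pow_succ (k : ℕ) :
    der ((-PowerSeries.X : ℚ⟦X⟧) ^ (k + 1)) = -((k : ℚ⟦X⟧) + 1) * (-PowerSeries.X) ^ k := by
  induction k with
  | zero =>
    norm_num
    have : (-PowerSeries.X : ℚ⟦X⟧) = 0 - PowerSeries.X := by ring
    rw [this, der_sub, der_X]
    have h0 : der (0 : ℚ⟦X⟧) = 0 := by have := der_C 0; simpa using this
    rw [h0]; ring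
  | succ k ih =>
    rw [pow_succ, der_mul, ih]
    have hnx : der (-PowerSeries.X : ℚ⟦X⟧) = -1 := by
      have : (-PowerSeries.X : ℚ⟦X⟧) = 0 - PowerSeries.X := by ring
      rw [this, der_sub, der_X]
      have h0 : der (0 : ℚ⟦X⟧) = 0 := by have := der_C 0; simpa using this
      rw [h0]; ring
    rw [hnx]
    push_cast
    ring

lemma der_partial (T : ℚ⟦X⟧) (n : ℕ) :
    der (∑ m ∈ Finset.range (n + 1),
        PowerSeries.C (R := ℚ) (1 / m.factorial) * (-PowerSeries.X) ^ m * der^[m] T) =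
    PowerSeries.C (R := ℚ) (1 / n.factorial) * (-PowerSeries.X) ^ n * der^[n + 1] T := by
  induction n with
  | zero =>
    simp only [zero_add, Finset.sum_range_one, pow_zero, Nat.factorial_zero,
      Function.iterate_zero, id_eq]
    rw [der_mul, der_mul, der_C]
    have h1 : der (1 : ℚ⟦X⟧) = 0 := by have := der_C 1; simpa using this
    rw [h1]
    simp
  | succ n ih =>
    rw [Finset.sum_range_succ, der_add, ih, der_mul, der_mul, der_C, der_negX_pow_succ,
      ← Function.iterate_succ_apply' der (n + 1) T]
    have hfacC : PowerSeries.C (R := ℚ) (1 / (n + 1).factorial) * PowerSeries.C (R := ℚ) ((n : ℚ) + 1) =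
        PowerSeries.C (R := ℚ) (1 / n.factorial) := by
      rw [← map_mul]
      congr 1
      rw [Nat.factorial_succ]
      have h1 : ((n : ℚ) + 1) ≠ 0 := by positivity
      have h2 : ((n.factorial : ℚ)) ≠ 0 := by
        exact_mod_cast Nat.cast_ne_zero.mpr n.factorial_ne_zero
      field_simp
      push_cast
      ring
    have hcast : ((n : ℚ⟦X⟧) + 1) = PowerSeries.C (R := ℚ) ((n : ℚ) + 1) := by simp
    rw [hcast]
    linear_combination (-((-PowerSeries.X) ^ n * der^[n + 1] T)) * hfacC

set_option maxHeartbeats 1000000 in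
lemma P1 (T : ℚ⟦X⟧)
    (hkey : PowerSeries.X * der T = T * (1 - T + PowerSeries.X)) (a : ℚ) (i k : ℕ) :
    PowerSeries.C (R := ℚ) ((i : ℚ) + (k : ℚ) + 2) *
        ((T * T - PowerSeries.X * T) * (PowerSeries.C (R := ℚ) a * (-PowerSeries.X) ^ k * T ^ i)) -
      (PowerSeries.X * (der (T * T - PowerSeries.X * T) *
          (PowerSeries.C (R := ℚ) a * (-PowerSeries.X) ^ k * T ^ i)) +
        PowerSeries.X * ((T * T - PowerSeries.X * T) *
          der (PowerSeries.C (R := ℚ) a * (-PowerSeries.X) ^ k * T ^ i))) =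
    PowerSeries.C (R := ℚ) (a * ((i : ℚ) + 2)) * ((-PowerSeries.X) ^ k * T ^ (i + 3)) +
      PowerSeries.C (R := ℚ) (a * (2 * (i : ℚ) + 3)) * ((-PowerSeries.X) ^ (k + 1) * T ^ (i + 2)) +
      PowerSeries.C (R := ℚ) (a * ((i : ℚ) + 1)) * ((-PowerSeries.X) ^ (k + 2) * T ^ (i + 1)) := by
  have hp := X_der_negX_pow k
  have hq := X_der_T_pow T hkey i
  rw [der_mul, der_mul, der_sub, der_mul, der_mul, der_X, der_C]
  simp only [map_add, map_mul, map_natCast, map_ofNat, map_one]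
  push_cast
  linear_combination (-(2 * T - PowerSeries.X) * PowerSeries.C (R := ℚ) a * (-PowerSeries.X) ^ k * T ^ i) * hkey +
    (-(T * T - PowerSeries.X * T) * PowerSeries.C (R := ℚ) a * T ^ i) * hp +
    (-(T * T - PowerSeries.X * T) * PowerSeries.C (R := ℚ) a * (-PowerSeries.X) ^ k) * hq

lemma scalar_id (n k : ℕ) (hn : 1 ≤ n) :
    ((n : ℚ) + 1) * AC (n + 1) k + ((n : ℚ) + 1) * AC (n + 1) (k + 1) =
      AC n (k - 1) * (k : ℚ) + AC n k * (2 * (k : ℚ) + 1) + AC n (k + 1) * ((k : ℚ) + 1) := by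
  cases k with
  | zero =>
    have h0 := AC_zero hn
    have h1 := AC_zero (show 1 ≤ n + 1 by omega)
    have h2 := AC_rec n 0
    push_cast at h2 ⊢
    rw [h0, h1] at *
    linarith [h2]
  | succ j =>
    have h1 := AC_rec n j
    have h2 := AC_rec n (j + 1)
    have e : j + 1 - 1 = j := rfl
    rw [e]
    push_cast at h1 h2 ⊢
    linarith [h1, h2]

set_option maxHeartbeats 800000 in
lemma sum_identity (T : ℚ⟦X⟧) (n : ℕ) (hn : 1 ≤ n) :
    ∑ i ∈ Finset.range (n + 1), PowerSeries.C (R := ℚ) (((n : ℚ) + 1) * AC (n + 1) (i + 1)) *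
        ((-PowerSeries.X) ^ (n - i) * T ^ (i + 2) +
          (-PowerSeries.X) ^ (n + 1 - i) * T ^ (i + 1)) =
    ∑ i ∈ Finset.range n,
        (PowerSeries.C (R := ℚ) (AC n (i + 1) * ((i : ℚ) + 2)) *
            ((-PowerSeries.X) ^ (n - (i + 1)) * T ^ (i + 3)) +
          PowerSeries.C (R := ℚ) (AC n (i + 1) * (2 * (i : ℚ) + 3)) *
            ((-PowerSeries.X) ^ (n - i) * T ^ (i + 2)) +
          PowerSeries.C (R := ℚ) (AC n (i + 1) * ((i : ℚ) + 1)) *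
            ((-PowerSeries.X) ^ (n + 1 - i) * T ^ (i + 1))) := by
  -- the common family of monomials
  set M : ℕ → ℚ⟦X⟧ := fun k => (-PowerSeries.X) ^ (n + 1 - k) * T ^ (k + 1) with hM
  -- W sums
  have hW12 :
      (∑ k ∈ Finset.range (n + 2), PowerSeries.C (R := ℚ) (((n : ℚ) + 1) * AC (n + 1) k) * M k) +
        (∑ k ∈ Finset.range (n + 2), PowerSeries.C (R := ℚ) (((n : ℚ) + 1) * AC (n + 1) (k + 1)) * M k)
      = (∑ k ∈ Finset.range (n + 2), PowerSeries.C (R := ℚ) (AC n (k - 1) * (k : ℚ)) * M k) +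
        (∑ k ∈ Finset.range (n + 2), PowerSeries.C (R := ℚ) (AC n k * (2 * (k : ℚ) + 1)) * M k) +
        (∑ k ∈ Finset.range (n + 2), PowerSeries.C (R := ℚ) (AC n (k + 1) * ((k : ℚ) + 1)) * M k) := by
    rw [← Finset.sum_add_distrib, ← Finset.sum_add_distrib, ← Finset.sum_add_distrib]
    apply Finset.sum_congr rfl
    intro k _
    rw [← add_mul, ← add_mul, ← add_mul, ← map_add, ← map_add, ← map_add, scalar_id n k hn]
  -- left side equals W1' + W2'
  have hsplitL : ∑ i ∈ Finset.range (n + 1), PowerSeries.C (R := ℚ) (((n : ℚ) + 1) * AC (n + 1) (i + 1)) *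
        ((-PowerSeries.X) ^ (n - i) * T ^ (i + 2) +
          (-PowerSeries.X) ^ (n + 1 - i) * T ^ (i + 1)) =
      (∑ i ∈ Finset.range (n + 1),
        PowerSeries.C (R := ℚ) (((n : ℚ) + 1) * AC (n + 1) (i + 1)) * M (i + 1)) +
      (∑ i ∈ Finset.range (n + 1),
        PowerSeries.C (R := ℚ) (((n : ℚ) + 1) * AC (n + 1) (i + 1)) * M i) := by
    rw [← Finset.sum_add_distrib]
    apply Finset.sum_congr rfl
    intro i hi
    rw [Finset.mem_range] at hi
    have e1 : n + 1 - (i + 1) = n - i := by omega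
    simp only [hM, e1]
    ring
  have hL1 : (∑ i ∈ Finset.range (n + 1),
        PowerSeries.C (R := ℚ) (((n : ℚ) + 1) * AC (n + 1) (i + 1)) * M (i + 1)) =
      ∑ k ∈ Finset.range (n + 2), PowerSeries.C (R := ℚ) (((n : ℚ) + 1) * AC (n + 1) k) * M k := by
    rw [Finset.sum_range_succ' (fun k => PowerSeries.C (R := ℚ) (((n : ℚ) + 1) * AC (n + 1) k) * M k) (n + 1)]
    rw [AC_zero (show 1 ≤ n + 1 by omega)]
    simp
  have hL2 : (∑ i ∈ Finset.range (n + 1),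
        PowerSeries.C (R := ℚ) (((n : ℚ) + 1) * AC (n + 1) (i + 1)) * M i) =
      ∑ k ∈ Finset.range (n + 2), PowerSeries.C (R := ℚ) (((n : ℚ) + 1) * AC (n + 1) (k + 1)) * M k := by
    rw [Finset.sum_range_succ (fun k => PowerSeries.C (R := ℚ) (((n : ℚ) + 1) * AC (n + 1) (k + 1)) * M k) (n + 1)]
    rw [AC_vanish (show n + 1 < n + 1 + 1 by omega)]
    simp
  -- right side equals W1 + W2 + W3
  have hR : ∑ i ∈ Finset.range n,
        (PowerSeries.C (R := ℚ) (AC n (i + 1) * ((i : ℚ) + 2)) *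
            ((-PowerSeries.X) ^ (n - (i + 1)) * T ^ (i + 3)) +
          PowerSeries.C (R := ℚ) (AC n (i + 1) * (2 * (i : ℚ) + 3)) *
            ((-PowerSeries.X) ^ (n - i) * T ^ (i + 2)) +
          PowerSeries.C (R := ℚ) (AC n (i + 1) * ((i : ℚ) + 1)) *
            ((-PowerSeries.X) ^ (n + 1 - i) * T ^ (i + 1))) =
      (∑ k ∈ Finset.range (n + 2), PowerSeries.C (R := ℚ) (AC n (k - 1) * (k : ℚ)) * M k) +
      (∑ k ∈ Finset.range (n + 2), PowerSeries.C (R := ℚ) (AC n k * (2 * (k : ℚ) + 1)) * M k) +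
      (∑ k ∈ Finset.range (n + 2), PowerSeries.C (R := ℚ) (AC n (k + 1) * ((k : ℚ) + 1)) * M k) := by
    have hS1 : (∑ k ∈ Finset.range (n + 2), PowerSeries.C (R := ℚ) (AC n (k - 1) * (k : ℚ)) * M k) =
        ∑ i ∈ Finset.range n, PowerSeries.C (R := ℚ) (AC n (i + 1) * ((i : ℚ) + 2)) *
            ((-PowerSeries.X) ^ (n - (i + 1)) * T ^ (i + 3)) := by
      rw [Finset.sum_range_succ' (fun k => PowerSeries.C (R := ℚ) (AC n (k - 1) * (k : ℚ)) * M k) (n + 1)]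
      simp only [Nat.add_sub_cancel, Nat.cast_add, Nat.cast_one, Nat.cast_zero, Nat.zero_sub,
        mul_zero, map_zero, zero_mul, add_zero]
      rw [Finset.sum_range_succ' (fun k => PowerSeries.C (R := ℚ) (AC n k * ((k : ℚ) + 1)) * M (k + 1)) n]
      simp only [Nat.cast_add, Nat.cast_one, Nat.cast_zero, zero_add]
      rw [AC_zero hn]
      simp only [zero_mul, map_zero, zero_mul, add_zero]
      apply Finset.sum_congr rfl
      intro i hi
      rw [Finset.mem_range] at hi
      have e2 : n + 1 - (i + 1 + 1) = n - (i + 1) := by omega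
      simp only [hM, e2]
      push_cast
      ring
    have hS2 : (∑ k ∈ Finset.range (n + 2), PowerSeries.C (R := ℚ) (AC n k * (2 * (k : ℚ) + 1)) * M k) =
        ∑ i ∈ Finset.range n, PowerSeries.C (R := ℚ) (AC n (i + 1) * (2 * (i : ℚ) + 3)) *
            ((-PowerSeries.X) ^ (n - i) * T ^ (i + 2)) := by
      rw [Finset.sum_range_succ' (fun k => PowerSeries.C (R := ℚ) (AC n k * (2 * (k : ℚ) + 1)) * M k) (n + 1)]
      rw [AC_zero hn]
      simp only [zero_mul, map_zero, zero_mul, add_zero]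
      rw [Finset.sum_range_succ]
      rw [AC_vanish (show n < n + 1 by omega)]
      simp only [zero_mul, map_zero, zero_mul, add_zero]
      apply Finset.sum_congr rfl
      intro i hi
      rw [Finset.mem_range] at hi
      have e1 : n + 1 - (i + 1) = n - i := by omega
      simp only [hM, e1]
      push_cast
      ring
    have hS3 : (∑ k ∈ Finset.range (n + 2), PowerSeries.C (R := ℚ) (AC n (k + 1) * ((k : ℚ) + 1)) * M k) =
        ∑ i ∈ Finset.range n, PowerSeries.C (R := ℚ) (AC n (i + 1) * ((i : ℚ) + 1)) *
            ((-PowerSeries.X) ^ (n + 1 - i) * T ^ (i + 1)) := by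
      rw [Finset.sum_range_succ, Finset.sum_range_succ]
      rw [AC_vanish (show n < n + 1 by omega), AC_vanish (show n < n + 1 + 1 by omega)]
      simp only [zero_mul, map_zero, zero_mul, add_zero]
      simp only [hM]
    rw [hS1, hS2, hS3]
    rw [← Finset.sum_add_distrib, ← Finset.sum_add_distrib]
  rw [hsplitL, hL1, hL2, hW12, hR]


set_option maxHeartbeats 1600000 in
/-- Lemma 3.2 of the paper: with `T(x) = x/(1 - e^{-x})` the Todd series
(characterized by `T · (1 - e^{-X}) = X`), for every `n ≥ 1`,
`∑_{m=0}^{n} ((-v)^m/m!) T^{(m)}(v)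
  = (T(v) - v T'(v)) · ∑_{l=1}^{n} A(n,l) (-v)^{n-l} T(v)^{l-1}`. -/
theorem stmt_6 (T : PowerSeries ℚ)
    (hT : T * (1 - PowerSeries.rescale (-1 : ℚ) (PowerSeries.exp ℚ)) = PowerSeries.X)
    (n : ℕ) (hn : 1 ≤ n) :
    ∑ m ∈ Finset.range (n + 1),
        PowerSeries.C (R := ℚ) (1 / m.factorial) * (-PowerSeries.X) ^ m * der^[m] T =
      (T - PowerSeries.X * der T) *
        ∑ l ∈ Finset.Icc 1 n,
          PowerSeries.C (R := ℚ) (A n l) * (-PowerSeries.X) ^ (n - l) * T ^ (l - 1) := by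
  -- basic consequences of the functional equation
  have hTE : T * PowerSeries.rescale (-1 : ℚ) (PowerSeries.exp ℚ) = T - PowerSeries.X := by
    linear_combination -hT
  have hder := congrArg der hT
  rw [der_mul, der_sub, der_one, der_E, der_X] at hder
  have hkey : PowerSeries.X * der T = T * (1 - T + PowerSeries.X) := by
    linear_combination T * hder + (-(der T)) * hT + (-T) * hTE
  have hIcc : ∀ (N : ℕ) (f : ℕ → ℚ⟦X⟧), ∑ l ∈ Finset.Icc 1 N, f l =
      ∑ i ∈ Finset.range N, f (1 + i) := by
    intro N f
    rw [← Finset.Ico_add_one_right_eq_Icc, Finset.sum_Ico_eq_sum_range]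
    simp
  induction n, hn using Nat.le_induction with
  | base =>
    rw [Finset.sum_range_succ, Finset.sum_range_one, Finset.Icc_self, Finset.sum_singleton]
    have hA11 : A 1 1 = 1 := by
      unfold A
      norm_num [Finset.sum_range_succ]
    rw [hA11]
    simp only [Function.iterate_zero, id_eq, Function.iterate_one, pow_zero, pow_one,
      Nat.factorial_zero, Nat.factorial_one, Nat.cast_one, Nat.sub_self]
    norm_num
    ring
  | succ n hn IH =>
    rw [Finset.sum_range_succ, IH]
    have hdR := der_partial T n
    rw [IH] at hdR
    set Qn := ∑ l ∈ Finset.Icc 1 n,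
        PowerSeries.C (R := ℚ) (A n l) * (-PowerSeries.X) ^ (n - l) * T ^ (l - 1) with hQn
    set Qs := ∑ l ∈ Finset.Icc 1 (n + 1),
        PowerSeries.C (R := ℚ) (A (n + 1) l) * (-PowerSeries.X) ^ (n + 1 - l) * T ^ (l - 1) with hQs
    have hfacC2 : PowerSeries.C (R := ℚ) (1 / ((n : ℚ) + 1)) * PowerSeries.C (R := ℚ) (1 / n.factorial) =
        PowerSeries.C (R := ℚ) (1 / (n + 1).factorial) := by
      rw [← map_mul]
      congr 1
      rw [Nat.factorial_succ]
      have h2 : ((n.factorial : ℚ)) ≠ 0 := Nat.cast_ne_zero.mpr n.factorial_ne_zero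
      have h1 : ((n : ℚ) + 1) ≠ 0 := by positivity
      push_cast
      field_simp
    have hterm : PowerSeries.C (R := ℚ) (1 / (n + 1).factorial) * (-PowerSeries.X) ^ (n + 1) *
        der^[n + 1] T =
        -(PowerSeries.C (R := ℚ) (1 / ((n : ℚ) + 1)) *
          (PowerSeries.X * der ((T - PowerSeries.X * der T) * Qn))) := by
      rw [hdR, pow_succ]
      linear_combination (-((-PowerSeries.X) ^ n * der^[n + 1] T * (-PowerSeries.X))) * hfacC2
    rw [hterm]
    have hMain : PowerSeries.C (R := ℚ) ((n : ℚ) + 1) * ((T - PowerSeries.X * der T) * Qs) =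
        PowerSeries.C (R := ℚ) ((n : ℚ) + 1) * ((T - PowerSeries.X * der T) * Qn) -
          PowerSeries.X * der ((T - PowerSeries.X * der T) * Qn) := by
      have hG : T - PowerSeries.X * der T = T * T - PowerSeries.X * T := by
        linear_combination -hkey
      rw [hG, hQn, hQs]
      rw [der_mul, der_sum]
      rw [hIcc (n + 1), hIcc n, hIcc n]
      simp only [Finset.mul_sum, mul_add]
      rw [← Finset.sum_add_distrib, ← Finset.sum_sub_distrib]
      trans (∑ i ∈ Finset.range (n + 1), PowerSeries.C (R := ℚ) (((n : ℚ) + 1) * AC (n + 1) (i + 1)) *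
        ((-PowerSeries.X) ^ (n - i) * T ^ (i + 2) +
          (-PowerSeries.X) ^ (n + 1 - i) * T ^ (i + 1)))
      · apply Finset.sum_congr rfl
        intro i hi
        rw [Finset.mem_range] at hi
        rw [show 1 + i = i + 1 from Nat.add_comm 1 i]
        rw [A_eq_AC (n + 1) (i + 1) (by omega)]
        rw [show i + 1 - 1 = i from rfl]
        rw [show n + 1 - (i + 1) = n - i by omega]
        rw [map_mul]
        rw [show n + 1 - i = (n - i) + 1 by omega, pow_succ]
        ring
      rw [sum_identity T n hn]
      apply Finset.sum_congr rfl
      intro i hi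
      rw [Finset.mem_range] at hi
      rw [show 1 + i = i + 1 from Nat.add_comm 1 i]
      rw [A_eq_AC n (i + 1) (by omega)]
      rw [show i + 1 - 1 = i from rfl]
      obtain ⟨k, hk⟩ : ∃ k, n = i + 1 + k := ⟨n - (i + 1), by omega⟩
      rw [show n - (i + 1) = k by omega, show n - i = k + 1 by omega,
        show n + 1 - i = k + 2 by omega,
        show ((n : ℚ) + 1) = (i : ℚ) + (k : ℚ) + 2 by rw [hk]; push_cast; ring]
      exact (P1 T hkey (AC n (i + 1)) i k).symm
    have hCinv : PowerSeries.C (R := ℚ) (1 / ((n : ℚ) + 1)) * PowerSeries.C (R := ℚ) ((n : ℚ) + 1) = 1 := by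
      rw [← map_mul]
      have h1 : ((n : ℚ) + 1) ≠ 0 := by positivity
      rw [one_div, inv_mul_cancel₀ h1, map_one]
    linear_combination (-(PowerSeries.C (R := ℚ) (1 / ((n : ℚ) + 1)))) * hMain +
      ((T - PowerSeries.X * der T) * Qs - (T - PowerSeries.X * der T) * Qn) * hCinv
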